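/- On U = {(t,r,θ,φ) ∈ ℝ⁴ : sin θ ≠ 0}, let X₁ = (0,0, sin φ, (cos θ/sin θ)cos φ), X₂ = (0,0, −cos φ, (cos θ/sin θ)sin φ), X₃ = (0,0,0,1) be the SO(3) symmetry vector fields, and define the functions f_I^î : U → ℝ (I, î ∈ {1,2,3}) with the only nonzero components f₁^1 = cos φ / sin θ and f₂^1 = sin φ / sin θ. Let C^k̂_{îĵ} be the structure constants of the isotropy algebra ([λ₁,λ₂] = −λ₃, [λ₁,λ₃] = λ₂, [λ₂,λ₃] = −λ₁, extended antisymmetrically in the lower indices) and C^K_{IJ} the structure constants of the symmetry algebra ([X₁,X₂] = −X₃, [X₁,X₃] = X₂, [X₂,X₃] = −X₁, extended antisymmetrically). Then for all I, J, k̂ and all x ∈ U: X_I(f_J^k̂)(x) − X_J(f_I^k̂)(x) − Σ_{î,ĵ} f_I^î(x) f_J^ĵ(x) C^k̂_{îĵ} = Σ_K C^K_{IJ} f_K^k̂(x), where X(f) denotes the directional derivative of f along the vector field X. -/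

import Mathlib

open Finset

/- Coordinates are `(t, r, θ, φ) = (x 0, x 1, x 2, x 3)`. -/

/-- The SO(3) symmetry vector fields X₁, X₂, X₃. -/
noncomputable def XSO3 : Fin 3 → (Fin 4 → ℝ) → (Fin 4 → ℝ) :=
  ![fun x => ![0, 0, Real.sin (x 3), (Real.cos (x 2) / Real.sin (x 2)) * Real.cos (x 3)],
    fun x => ![0, 0, -Real.cos (x 3), (Real.cos (x 2) / Real.sin (x 2)) * Real.sin (x 3)],
    fun _ => ![0, 0, 0, 1]]

/-- The functions `f I î`; the only nonzero components are
`f₁¹ = cos φ / sin θ` and `f₂¹ = sin φ / sin θ`. -/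
noncomputable def fSO3 : Fin 3 → Fin 3 → (Fin 4 → ℝ) → ℝ :=
  ![![fun x => Real.cos (x 3) / Real.sin (x 2), fun _ => 0, fun _ => 0],
    ![fun x => Real.sin (x 3) / Real.sin (x 2), fun _ => 0, fun _ => 0],
    ![fun _ => 0, fun _ => 0, fun _ => 0]]

/-- The structure constants of so(3): `[λ₁,λ₂] = −λ₃`, `[λ₁,λ₃] = λ₂`,
`[λ₂,λ₃] = −λ₁`, extended antisymmetrically; `CSO3 k i j` is `C^k_{ij}`.
These are also the structure constants of the symmetry algebra. -/
def CSO3 : Fin 3 → Fin 3 → Fin 3 → ℝ :=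
  ![![![0, 0, 0], ![0, 0, -1], ![0, 1, 0]],
    ![![0, 0, 1], ![0, 0, 0], ![-1, 0, 0]],
    ![![0, -1, 0], ![1, 0, 0], ![0, 0, 0]]]


noncomputable def pj (i : Fin 4) : (Fin 4 → ℝ) →L[ℝ] ℝ := ContinuousLinearMap.proj i

lemma fd_cos (x : Fin 4 → ℝ) (hx : Real.sin (x 2) ≠ 0) (v : Fin 4 → ℝ) :
    fderiv ℝ (fun x : Fin 4 → ℝ => Real.cos (x 3) / Real.sin (x 2)) x v
    = (-Real.sin (x 3) * v 3 * Real.sin (x 2) - Real.cos (x 3) * (Real.cos (x 2) * v 2)) / Real.sin (x 2) ^ 2 := by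
  have h1 : HasFDerivAt (fun x : Fin 4 → ℝ => Real.cos (x 3)) ((-Real.sin (x 3)) • pj 3) x :=
    (Real.hasDerivAt_cos (x 3)).comp_hasFDerivAt (f := fun y : Fin 4 → ℝ => y 3) x (hasFDerivAt_apply 3 x)
  have h2 : HasFDerivAt (fun x : Fin 4 → ℝ => Real.sin (x 2)) (Real.cos (x 2) • pj 2) x :=
    (Real.hasDerivAt_sin (x 2)).comp_hasFDerivAt (f := fun y : Fin 4 → ℝ => y 2) x (hasFDerivAt_apply 2 x)
  have h2i : HasFDerivAt (fun x : Fin 4 → ℝ => (Real.sin (x 2))⁻¹)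
      ((-(Real.sin (x 2) ^ 2)⁻¹) • (Real.cos (x 2) • pj 2)) x :=
    (hasDerivAt_inv hx).comp_hasFDerivAt x h2
  have h : HasFDerivAt (fun x : Fin 4 → ℝ => Real.cos (x 3) * (Real.sin (x 2))⁻¹) _ x := h1.mul h2i
  rw [show (fun x : Fin 4 → ℝ => Real.cos (x 3) / Real.sin (x 2))
      = fun x : Fin 4 → ℝ => Real.cos (x 3) * (Real.sin (x 2))⁻¹ by ext y; rw [div_eq_mul_inv]]
  rw [h.fderiv]
  simp [pj]
  field_simp
  ring

lemma fd_sin (x : Fin 4 → ℝ) (hx : Real.sin (x 2) ≠ 0) (v : Fin 4 → ℝ) :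
    fderiv ℝ (fun x : Fin 4 → ℝ => Real.sin (x 3) / Real.sin (x 2)) x v
    = (Real.cos (x 3) * v 3 * Real.sin (x 2) - Real.sin (x 3) * (Real.cos (x 2) * v 2)) / Real.sin (x 2) ^ 2 := by
  have h1 : HasFDerivAt (fun x : Fin 4 → ℝ => Real.sin (x 3)) (Real.cos (x 3) • pj 3) x :=
    (Real.hasDerivAt_sin (x 3)).comp_hasFDerivAt (f := fun y : Fin 4 → ℝ => y 3) x (hasFDerivAt_apply 3 x)
  have h2 : HasFDerivAt (fun x : Fin 4 → ℝ => Real.sin (x 2)) (Real.cos (x 2) • pj 2) x :=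
    (Real.hasDerivAt_sin (x 2)).comp_hasFDerivAt (f := fun y : Fin 4 → ℝ => y 2) x (hasFDerivAt_apply 2 x)
  have h2i : HasFDerivAt (fun x : Fin 4 → ℝ => (Real.sin (x 2))⁻¹)
      ((-(Real.sin (x 2) ^ 2)⁻¹) • (Real.cos (x 2) • pj 2)) x :=
    (hasDerivAt_inv hx).comp_hasFDerivAt x h2
  have h : HasFDerivAt (fun x : Fin 4 → ℝ => Real.sin (x 3) * (Real.sin (x 2))⁻¹) _ x := h1.mul h2i
  rw [show (fun x : Fin 4 → ℝ => Real.sin (x 3) / Real.sin (x 2))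
      = fun x : Fin 4 → ℝ => Real.sin (x 3) * (Real.sin (x 2))⁻¹ by ext y; rw [div_eq_mul_inv]]
  rw [h.fderiv]
  simp [pj]
  field_simp
  ring

set_option maxHeartbeats 2000000 in
theorem stmt_15 (I J k : Fin 3) (x : Fin 4 → ℝ) (hx : Real.sin (x 2) ≠ 0) :
    fderiv ℝ (fSO3 J k) x (XSO3 I x) - fderiv ℝ (fSO3 I k) x (XSO3 J x)
      - ∑ i, ∑ j, fSO3 I i x * fSO3 J j x * CSO3 k i j
    = ∑ K, CSO3 K I J * fSO3 K k x := by
  fin_cases I <;> fin_cases J <;> fin_cases k <;>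
    simp [XSO3, fSO3, CSO3, Fin.sum_univ_three, fd_cos x hx, fd_sin x hx,
      Matrix.vecHead, Matrix.vecTail] <;>
    field_simp <;> ring_nf
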